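/- arXiv:1105.3067 — 2 statements merged into one kernel-verified Lean document; each statement's English description precedes it below -/
import Mathlib

section
/- Let Q be a strongly connected finite quiver with no loops on n+1 vertices in which every primitive cycle has length n+1 (i.e., every simple directed cycle is Hamiltonian) and every vertex has in-degree and out-degree at least 2. Then Q contains, as a subquiver, a directed Hamiltonian cycle together with at least one additional arrow parallel to each of at least two distinct arrows of that cycle; in particular |C| + |V| - |A| - 1 ≥ 1 where C is the set of primitive cycles. -/
/-- A quiver (finite directed multigraph): a finite set of vertices `V`,
a finite set of arrows `A`, and source/target maps `s`, `t`. -/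
structure Quiv where
  V : Type
  A : Type
  [fintV : Fintype V]
  [fintA : Fintype A]
  [decV : DecidableEq V]
  [decA : DecidableEq A]
  s : A → V
  t : A → V

attribute [instance] Quiv.fintV Quiv.fintA Quiv.decV Quiv.decA

namespace Quiv

variable (Q : Quiv)

/-- Cyclic access to the entries of a nonempty list. -/
def cyc (l : List Q.A) (hl : l ≠ []) (i : ℕ) : Q.A :=
  l.get ⟨i % l.length, Nat.mod_lt _ (List.length_pos_iff.mpr hl)⟩

/-- `l` is a (nonempty) directed cycle: consecutive arrows compose, cyclically. -/
def IsCycleList (l : List Q.A) : Prop :=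
  ∃ hl : l ≠ [], ∀ i : ℕ, Q.t (Q.cyc l hl i) = Q.s (Q.cyc l hl (i + 1))

/-- A primitive (simple) cycle: a directed cycle visiting no vertex more than once. -/
def IsPrimCycle (l : List Q.A) : Prop :=
  Q.IsCycleList l ∧ (l.map Q.s).Nodup

/-- The set of primitive cycles of `Q`, each recorded by its (finite) set of arrows.
A primitive cycle is determined, up to rotation, by its set of arrows. -/
def primCycles : Set (Finset Q.A) :=
  { S | ∃ l : List Q.A, Q.IsPrimCycle l ∧ l.toFinset = S }

/-- The number of primitive cycles of `Q`. -/
noncomputable def numPrimCycles : ℕ := Q.primCycles.ncard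

/-- One-step reachability. -/
def Step (u v : Q.V) : Prop := ∃ a : Q.A, Q.s a = u ∧ Q.t a = v

/-- `Q` is strongly connected: every vertex is reachable from every other
by a directed path. -/
def StronglyConnected : Prop := ∀ u v : Q.V, Relation.ReflTransGen Q.Step u v

/-- `Q` has no loops. -/
def NoLoops : Prop := ∀ a : Q.A, Q.s a ≠ Q.t a

/-- In-degree of a vertex (arrows counted with multiplicity). -/
def inDeg (v : Q.V) : ℕ := (Finset.univ.filter fun a => Q.t a = v).card

/-- Out-degree of a vertex (arrows counted with multiplicity). -/
def outDeg (v : Q.V) : ℕ := (Finset.univ.filter fun a => Q.s a = v).card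

/-- `F(Q) = |C| + |V| - |A| - 1`, the codimension of the associated toric variety. -/
noncomputable def F : ℤ :=
  (Q.numPrimCycles : ℤ) + (Fintype.card Q.V : ℤ) - (Fintype.card Q.A : ℤ) - 1

/-! ### Auxiliary path machinery -/

/-- `p` is a directed path of arrows from `u` to `v`. -/
def IsPath : List Q.A → Q.V → Q.V → Prop
  | [], u, v => u = v
  | a :: p, u, v => Q.s a = u ∧ IsPath p (Q.t a) v

variable {Q}

lemma isPath_append {p q : List Q.A} {u v w : Q.V}
    (hp : Q.IsPath p u w) (hq : Q.IsPath q w v) : Q.IsPath (p ++ q) u v := by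
  induction p generalizing u with
  | nil => cases hp; simpa using hq
  | cons a p ih => exact ⟨hp.1, ih hp.2⟩

lemma isPath_append_split {p q : List Q.A} {u v : Q.V}
    (h : Q.IsPath (p ++ q) u v) : ∃ w, Q.IsPath p u w ∧ Q.IsPath q w v := by
  induction p generalizing u with
  | nil => exact ⟨u, rfl, h⟩
  | cons a p ih =>
      obtain ⟨w, h1, h2⟩ := ih h.2
      exact ⟨w, ⟨h.1, h1⟩, h2⟩

lemma isPath_of_reflTransGen {u v : Q.V} (h : Relation.ReflTransGen Q.Step u v) :
    ∃ p, Q.IsPath p u v := by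
  induction h with
  | refl => exact ⟨[], rfl⟩
  | tail _ hstep ih =>
      obtain ⟨p, hp⟩ := ih
      obtain ⟨a, ha1, ha2⟩ := hstep
      exact ⟨p ++ [a], isPath_append hp ⟨ha1, ha2⟩⟩

lemma exists_simple_path {p : List Q.A} {u v : Q.V} (h : Q.IsPath p u v) :
    ∃ q, Q.IsPath q u v ∧ (q.map Q.s).Nodup ∧ v ∉ q.map Q.s := by
  induction p generalizing u with
  | nil => cases h; exact ⟨[], rfl, by simp, by simp⟩
  | cons a p ih =>
      obtain ⟨q', hq', hnd', hv'⟩ := ih h.2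
      by_cases huv : u = v
      · exact ⟨[], huv, by simp, by simp⟩
      by_cases hu : u ∈ q'.map Q.s
      · -- shortcut: start at the first arrow of `q'` with source `u`
        obtain ⟨a', ha'q, ha's⟩ := List.mem_map.1 hu
        obtain ⟨q₁, q₂, rfl⟩ := List.append_of_mem ha'q
        obtain ⟨w, _, hq₂⟩ := isPath_append_split hq'
        have hsub : (a' :: q₂).Sublist (q₁ ++ a' :: q₂) := List.sublist_append_right _ _
        have hsubm : ((a' :: q₂).map Q.s).Sublist ((q₁ ++ a' :: q₂).map Q.s) := hsub.map _
        exact ⟨a' :: q₂, ⟨ha's, hq₂.2⟩, hsubm.nodup hnd', fun hc => hv' (hsubm.mem hc)⟩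
      · refine ⟨a :: q', ⟨h.1, hq'⟩, ?_, ?_⟩
        · simp only [List.map_cons, List.nodup_cons]
          exact ⟨h.1 ▸ hu, hnd'⟩
        · simp only [List.map_cons, List.mem_cons, not_or]
          refine ⟨fun hc => huv ?_, hv'⟩
          rw [h.1] at hc; exact hc.symm

lemma isPath_get {p : List Q.A} {u v : Q.V} (h : Q.IsPath p u v)
    (i : ℕ) (hi : i + 1 < p.length) :
    Q.t (p.get ⟨i, by omega⟩) = Q.s (p.get ⟨i + 1, hi⟩) := by
  induction p generalizing u i with
  | nil => simp at hi
  | cons a p ih =>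
      cases i with
      | zero =>
          have hp : p ≠ [] := by
            intro hc; rw [hc] at hi; simp at hi
          obtain ⟨b, p', rfl⟩ := List.exists_cons_of_ne_nil hp
          exact (h.2.1).symm
      | succ j => exact ih h.2 j (by simpa using hi)

lemma isPath_get_last {p : List Q.A} {u v : Q.V} (h : Q.IsPath p u v) (hp : p ≠ []) :
    Q.t (p.get ⟨p.length - 1, by
      have := List.length_pos_iff.mpr hp; omega⟩) = v := by
  induction p generalizing u with
  | nil => exact absurd rfl hp
  | cons a p ih =>
      by_cases hp' : p = []
      · subst hp'
        have h2 : Q.t a = v := h.2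
        simpa using h2
      · have hlp := List.length_pos_iff.mpr hp'
        have e : (a :: p).get ⟨(a :: p).length - 1, by simp⟩
            = p.get ⟨p.length - 1, by omega⟩ := by
          rw [show (⟨(a :: p).length - 1, by simp⟩ : Fin (a :: p).length)
              = ⟨(p.length - 1) + 1, by simp; omega⟩ from Fin.ext (by simp; omega)]
          rfl
        rw [e]
        exact ih h.2 hp'

variable (Q)

lemma cyc_eq_get {l : List Q.A} (hl : l ≠ []) {i : ℕ} (h : i < l.length) :
    Q.cyc l hl i = l.get ⟨i, h⟩ := by
  simp [cyc, Nat.mod_eq_of_lt h]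

variable {Q}

lemma get_idx_congr {α : Type*} (l : List α) {i j : ℕ} {hi : i < l.length}
    {hj : j < l.length} (h : i = j) : l.get ⟨i, hi⟩ = l.get ⟨j, hj⟩ := by
  subst h; rfl

lemma isCycleList_mk {l : List Q.A} (hl : l ≠ [])
    (hcons : ∀ i : ℕ, ∀ h : i + 1 < l.length,
      Q.t (l.get ⟨i, by omega⟩) = Q.s (l.get ⟨i + 1, h⟩))
    (hwrap : Q.t (l.get ⟨l.length - 1, by
      have := List.length_pos_iff.mpr hl; omega⟩) = Q.s (l.get ⟨0, List.length_pos_iff.mpr hl⟩)) :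
    Q.IsCycleList l := by
  refine ⟨hl, fun i => ?_⟩
  have hlen := List.length_pos_iff.mpr hl
  have hj : i % l.length < l.length := Nat.mod_lt _ hlen
  have e0 : Q.cyc l hl i = l.get ⟨i % l.length, hj⟩ := rfl
  by_cases h : i % l.length + 1 < l.length
  · have h' : (i + 1) % l.length = i % l.length + 1 := by
      rw [← Nat.mod_add_mod]; exact Nat.mod_eq_of_lt h
    have e1 : Q.cyc l hl (i + 1) = l.get ⟨i % l.length + 1, h⟩ := by
      simp only [cyc]; congr 1; exact Fin.ext h'
    rw [e0, e1]
    exact hcons _ h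
  · have h1 : i % l.length = l.length - 1 := by omega
    have h2 : (i + 1) % l.length = 0 := by
      rw [← Nat.mod_add_mod, h1, Nat.sub_add_cancel (by omega), Nat.mod_self]
    have e1 : Q.cyc l hl i = l.get ⟨l.length - 1, by omega⟩ := by
      rw [e0]; congr 1; exact Fin.ext h1
    have e2 : Q.cyc l hl (i + 1) = l.get ⟨0, hlen⟩ := by
      simp only [cyc]; congr 1; exact Fin.ext h2
    rw [e1, e2]; exact hwrap

lemma isCycleList_get {l : List Q.A} (h : Q.IsCycleList l) (hl : l ≠ [])
    (i : ℕ) (hi : i + 1 < l.length) :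
    Q.t (l.get ⟨i, by omega⟩) = Q.s (l.get ⟨i + 1, hi⟩) := by
  obtain ⟨hl', hc⟩ := h
  have := hc i
  rwa [Q.cyc_eq_get hl' (by omega), Q.cyc_eq_get hl' hi] at this

lemma isCycleList_wrap {l : List Q.A} (h : Q.IsCycleList l) (hl : l ≠ []) :
    Q.t (l.get ⟨l.length - 1, by have := List.length_pos_iff.mpr hl; omega⟩) =
      Q.s (l.get ⟨0, List.length_pos_iff.mpr hl⟩) := by
  obtain ⟨hl', hc⟩ := h
  have hlen := List.length_pos_iff.mpr hl
  have := hc (l.length - 1)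
  have e0 : Q.cyc l hl' (l.length - 1) = l.get ⟨l.length - 1, by omega⟩ := by
    simp only [cyc]; congr 1; exact Fin.ext (Nat.mod_eq_of_lt (by omega))
  have h2 : (l.length - 1 + 1) % l.length = 0 := by
    rw [Nat.sub_add_cancel (by omega), Nat.mod_self]
  have e1 : Q.cyc l hl' (l.length - 1 + 1) = l.get ⟨0, hlen⟩ := by
    simp only [cyc]; congr 1; exact Fin.ext h2
  rw [e0, e1] at this
  exact this

/-- Rotations of primitive cycles are primitive cycles. -/
lemma isPrimCycle_rotate {l : List Q.A} (h : Q.IsPrimCycle l) (k : ℕ) :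
    Q.IsPrimCycle (l.rotate k) := by
  obtain ⟨⟨hl, hc⟩, hnd⟩ := h
  have hlen := List.length_pos_iff.mpr hl
  have hl' : l.rotate k ≠ [] := by
    intro hc'
    have := List.length_rotate l k
    rw [hc'] at this; simp at this; omega
  constructor
  · refine ⟨hl', fun i => ?_⟩
    have key : ∀ j : ℕ, Q.cyc (l.rotate k) hl' j = Q.cyc l hl (j + k) := by
      intro j
      simp only [cyc, List.get_rotate, List.length_rotate]
      congr 1
      apply Fin.ext
      simp only [List.length_rotate]
      exact Nat.mod_add_mod _ _ _
    rw [key i, key (i + 1)]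
    have := hc (i + k)
    convert this using 3
    omega
  · rw [List.map_rotate]
    exact List.nodup_rotate.mpr hnd

/-! ### Product inequality -/

lemma prod_ineq_aux {α : Type*} [DecidableEq α] (s : Finset α) (d : α → ℕ)
    (hs : s.Nonempty) (h1 : ∀ u ∈ s, 1 ≤ d u) :
    ∑ u ∈ s, d u + 1 ≤ ∏ u ∈ s, d u + s.card := by
  induction hs using Finset.Nonempty.cons_induction with
  | singleton a => simp
  | cons a s ha hs ih =>
      rw [Finset.sum_cons, Finset.prod_cons, Finset.card_cons]
      have ih' := ih (fun u hu => h1 u (Finset.mem_cons_of_mem hu))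
      have hda : 1 ≤ d a := h1 a (Finset.mem_cons_self a s)
      have hp : 1 ≤ ∏ u ∈ s, d u :=
        Finset.one_le_prod' (fun u hu => h1 u (Finset.mem_cons_of_mem hu))
      have : d a + ∏ u ∈ s, d u ≤ d a * ∏ u ∈ s, d u + 1 := by
        rcases Nat.exists_eq_add_of_le hda with ⟨e, he⟩
        rcases Nat.exists_eq_add_of_le hp with ⟨f, hf⟩
        rw [he, hf]; ring_nf; nlinarith
      omega

lemma prod_ineq {α : Type*} [DecidableEq α] (s : Finset α) (d : α → ℕ)
    (h2 : ∀ u ∈ s, 2 ≤ d u) (hc : 2 ≤ s.card) :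
    ∑ u ∈ s, d u + 2 ≤ ∏ u ∈ s, d u + s.card := by
  obtain ⟨a, ha⟩ : s.Nonempty := Finset.card_pos.mp (by omega)
  obtain ⟨s', ha', rfl⟩ : ∃ (s' : Finset α) (h : a ∉ s'), s = Finset.cons a s' h := by
    refine ⟨s.erase a, Finset.notMem_erase a s, ?_⟩
    rw [Finset.cons_eq_insert, Finset.insert_erase ha]
  rw [Finset.sum_cons, Finset.prod_cons, Finset.card_cons] at *
  have hs' : s'.Nonempty := Finset.card_pos.mp (by omega)
  have ih := prod_ineq_aux s' d hs' (fun u hu => by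
    have := h2 u (Finset.mem_cons_of_mem hu); omega)
  have hda : 2 ≤ d a := h2 a (Finset.mem_cons_self a s')
  have hp : 2 ≤ ∏ u ∈ s', d u := by
    obtain ⟨b, hb⟩ := hs'
    calc 2 ≤ d b := h2 b (Finset.mem_cons_of_mem hb)
    _ ≤ ∏ u ∈ s', d u := Finset.single_le_prod' (fun u hu => by
        have := h2 u (Finset.mem_cons_of_mem hu); omega) hb
  have key : d a + ∏ u ∈ s', d u ≤ d a * ∏ u ∈ s', d u := Nat.add_le_mul hda hp
  omega

/-! ### Main theorem -/

/-- if `Q` is strongly connected, has no loops, has `n+1` vertices, every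
primitive cycle is Hamiltonian (length `n+1`) and every vertex has in- and out-degree
at least 2, then `Q` contains a Hamiltonian cycle together with extra arrows parallel
to (at least) two distinct arrows of that cycle; in particular `F(Q) ≥ 1`. -/
theorem stmt_2 (Q : Quiv) (n : ℕ) (hcard : Fintype.card Q.V = n + 1)
    (hSC : Q.StronglyConnected) (hNL : Q.NoLoops)
    (hham : ∀ l : List Q.A, Q.IsPrimCycle l → l.length = n + 1)
    (hdeg : ∀ v : Q.V, 2 ≤ Q.inDeg v ∧ 2 ≤ Q.outDeg v) :
    (∃ l : List Q.A, Q.IsPrimCycle l ∧ l.length = n + 1 ∧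
      ∃ a₁ a₂ b₁ b₂ : Q.A, a₁ ∈ l ∧ a₂ ∈ l ∧ a₁ ≠ a₂ ∧
        b₁ ∉ l ∧ b₂ ∉ l ∧ b₁ ≠ b₂ ∧
        Q.s b₁ = Q.s a₁ ∧ Q.t b₁ = Q.t a₁ ∧ Q.s b₂ = Q.s a₂ ∧ Q.t b₂ = Q.t a₂) ∧
    1 ≤ Q.F := by
  classical
  -- there is a vertex
  have hVne : Nonempty Q.V := by
    rw [← Fintype.card_pos_iff, hcard]; omega
  obtain ⟨v₀⟩ := hVne
  -- there is an arrow
  have hAne : Nonempty Q.A := by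
    have := (hdeg v₀).2
    rw [outDeg] at this
    obtain ⟨a, -⟩ : (Finset.univ.filter fun a => Q.s a = v₀).Nonempty :=
      Finset.card_pos.mp (by omega)
    exact ⟨a⟩
  obtain ⟨a₀⟩ := hAne
  -- n ≥ 1
  have hn : 1 ≤ n := by
    by_contra hc
    have hn0 : n = 0 := by omega
    rw [hn0] at hcard
    have := Fintype.card_le_one_iff.mp (le_of_eq hcard) (Q.s a₀) (Q.t a₀)
    exact hNL a₀ this
  -- build a primitive cycle
  obtain ⟨p, hp⟩ := isPath_of_reflTransGen (hSC (Q.t a₀) (Q.s a₀))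
  obtain ⟨q, hq, hqnd, hqs⟩ := exists_simple_path hp
  set l₀ : List Q.A := a₀ :: q with hl₀def
  have hl₀ne : l₀ ≠ [] := by simp [hl₀def]
  have hl₀prim : Q.IsPrimCycle l₀ := by
    constructor
    · apply isCycleList_mk hl₀ne
      · intro i hi
        cases i with
        | zero =>
            have hqne : q ≠ [] := by
              intro hc; rw [hl₀def, hc] at hi; simp at hi
            obtain ⟨b, q', rfl⟩ := List.exists_cons_of_ne_nil hqne
            exact hq.1.symm
        | succ j =>
            have hj : j + 1 < q.length := by
              rw [hl₀def] at hi; simpa using hi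
            exact isPath_get hq j hj
      · by_cases hqne : q = []
        ·
          subst hqne
          simp only [hl₀def]
          have : Q.t a₀ = Q.s a₀ := hq
          simpa [hl₀def] using this
        · have hql := List.length_pos_iff.mpr hqne
          have hlen : l₀.length - 1 = (q.length - 1) + 1 := by
            simp [hl₀def]; omega
          have hlast : Q.t (q.get ⟨q.length - 1, by omega⟩) = Q.s a₀ :=
            isPath_get_last hq hqne
          have e1 : l₀.get ⟨l₀.length - 1, by have := List.length_pos_iff.mpr hl₀ne; omega⟩
              = q.get ⟨q.length - 1, by omega⟩ := by
            have : l₀.get ⟨(q.length - 1) + 1, by simp [hl₀def]; omega⟩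
                = q.get ⟨q.length - 1, by omega⟩ := by
              simp [hl₀def]
            rw [← this]
            congr 1
            exact Fin.ext hlen
          rw [e1, hlast]
          simp [hl₀def]
    · simp only [hl₀def, List.map_cons, List.nodup_cons]
      constructor
      · intro hc
        exact hqs hc
      · exact hqnd
  have hl₀len : l₀.length = n + 1 := hham l₀ hl₀prim
  -- sources of l₀ enumerate all vertices
  have hsurj : ∀ v : Q.V, v ∈ l₀.map Q.s := by
    intro v
    have h1 : (l₀.map Q.s).toFinset.card = n + 1 := by
      rw [List.toFinset_card_of_nodup hl₀prim.2]
      simp [hl₀len]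
    have h2 : (l₀.map Q.s).toFinset = Finset.univ :=
      Finset.eq_univ_of_card _ (by rw [h1, hcard])
    have := Finset.mem_univ v
    rw [← h2, List.mem_toFinset] at this
    exact this
  -- the parallel lemma: every arrow with the same source as an arrow of a
  -- primitive Hamiltonian cycle has the same target
  have parallel : ∀ (l : List Q.A), Q.IsPrimCycle l → ∀ (b : Q.A) (k : Fin l.length),
      Q.s (l.get k) = Q.s b → Q.t b = Q.t (l.get k) := by
    intro l hl b k hk
    have hlne : l ≠ [] := by
      intro hc; subst hc; exact absurd k.2 (by simp)
    have hllen : l.length = n + 1 := hham l hl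
    have hsurjl : ∀ w : Q.V, w ∈ l.map Q.s := by
      intro w
      have h1 : (l.map Q.s).toFinset.card = n + 1 := by
        rw [List.toFinset_card_of_nodup hl.2]
        simp [hllen]
      have h2 : (l.map Q.s).toFinset = Finset.univ :=
        Finset.eq_univ_of_card _ (by rw [h1, hcard])
      have := Finset.mem_univ w
      rwa [← h2, List.mem_toFinset] at this
    set u := Q.s b with hu
    set v := Q.t b with hv
    have huv : u ≠ v := hNL b
    -- rotate so that the arrow at position k is first
    set r := l.rotate k.1 with hrdef
    have hrprim : Q.IsPrimCycle r := isPrimCycle_rotate hl k.1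
    have hrlen : r.length = n + 1 := by rw [hrdef, List.length_rotate, hllen]
    have hrne : r ≠ [] := by
      intro hc; rw [hc] at hrlen; simp at hrlen
    have hr0 : r.get ⟨0, by omega⟩ = l.get k := by
      show (l.rotate k.1).get ⟨0, by rw [List.length_rotate]; omega⟩ = l.get k
      rw [List.get_rotate]
      congr 1
      exact Fin.ext (by simp [Nat.mod_eq_of_lt k.2])
    -- find position of v among sources of r
    have hvmem : v ∈ r.map Q.s := by
      rw [hrdef, List.map_rotate]
      exact (List.mem_rotate).mpr (hsurjl v)
    obtain ⟨iv, hiv⟩ := List.mem_iff_get.mp hvmem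
    have hivlt : iv.1 < r.length := by
      have := iv.2; simpa using this
    have hivs : Q.s (r.get ⟨iv.1, hivlt⟩) = v := by
      rw [← hiv]
      simp
    set m := iv.1 with hm
    have hm1 : 1 ≤ m := by
      rcases Nat.eq_zero_or_pos m with h0 | h1
      · exfalso
        have e : (⟨m, hivlt⟩ : Fin r.length) = ⟨0, by omega⟩ := Fin.ext h0
        rw [e, hr0, hk] at hivs
        exact huv hivs
      · exact h1
    -- the cycle b :: r.drop m
    set l' : List Q.A := b :: r.drop m with hl'def
    have hl'len : l'.length = 1 + (r.length - m) := by
      simp [hl'def]; omega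
    have hl'ne : l' ≠ [] := by simp [hl'def]
    have hdropget : ∀ (j : ℕ) (hj : j < r.length - m),
        (r.drop m).get ⟨j, by simp; omega⟩ = r.get ⟨m + j, by omega⟩ := by
      intro j hj
      simp
    have hl'prim : Q.IsPrimCycle l' := by
      constructor
      · apply isCycleList_mk hl'ne
        · intro i hi
          cases i with
          | zero =>
              have h0 : (0 : ℕ) < r.length - m := by
                rw [hl'len] at hi; omega
              have e1 : l'.get ⟨1, by rw [hl'len]; omega⟩ = r.get ⟨m, by omega⟩ := by
                have : l'.get ⟨1, by rw [hl'len]; omega⟩ = (r.drop m).get ⟨0, by simp; omega⟩ := by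
                  simp [hl'def]
                rw [this, hdropget 0 h0]
                exact get_idx_congr r (by omega)
              show Q.t b = _
              rw [show (⟨0 + 1, hi⟩ : Fin l'.length) = ⟨1, by rw [hl'len]; omega⟩ from rfl, e1]
              rw [show r.get ⟨m, by omega⟩ = r.get ⟨iv.1, hivlt⟩ from rfl, hivs]
          | succ j =>
              have hj2 : j + 2 ≤ r.length - m := by rw [hl'len] at hi; omega
              have e1 : l'.get ⟨j + 1, by rw [hl'len]; omega⟩
                  = r.get ⟨m + j, by omega⟩ := by
                have : l'.get ⟨j + 1, by rw [hl'len]; omega⟩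
                    = (r.drop m).get ⟨j, by simp; omega⟩ := by simp [hl'def]
                rw [this, hdropget j (by omega)]
              have e2 : l'.get ⟨j + 1 + 1, hi⟩ = r.get ⟨m + j + 1, by omega⟩ := by
                have : l'.get ⟨j + 1 + 1, hi⟩
                    = (r.drop m).get ⟨j + 1, by simp; omega⟩ := by simp [hl'def]
                rw [this, hdropget (j + 1) (by omega)]
                exact get_idx_congr r (by omega)
              rw [e1, e2]
              exact isCycleList_get hrprim.1 hrne (m + j) (by omega)
        · have hlast : l'.get ⟨l'.length - 1, by have := List.length_pos_iff.mpr hl'ne; omega⟩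
              = r.get ⟨r.length - 1, by omega⟩ := by
            have hlen1 : l'.length - 1 = (r.length - m - 1) + 1 := by
              rw [hl'len]; omega
            have : l'.get ⟨(r.length - m - 1) + 1, by rw [hl'len]; omega⟩
                = (r.drop m).get ⟨r.length - m - 1, by simp; omega⟩ := by simp [hl'def]
            rw [show (⟨l'.length - 1, by have := List.length_pos_iff.mpr hl'ne; omega⟩ : Fin l'.length)
                = ⟨(r.length - m - 1) + 1, by rw [hl'len]; omega⟩ from Fin.ext hlen1,
              this, hdropget (r.length - m - 1) (by omega)]
            exact get_idx_congr r (by omega)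
          rw [hlast]
          have hwrap := isCycleList_wrap hrprim.1 hrne
          rw [hwrap, hr0, hk]
          rfl
      · have hmap : l'.map Q.s = u :: (r.map Q.s).drop m := by
          simp [hl'def, List.map_drop, hu]
        rw [hmap, List.nodup_cons]
        have hrnd : (r.map Q.s).Nodup := hrprim.2
        constructor
        · intro hc
          rw [List.mem_iff_get] at hc
          obtain ⟨j, hj⟩ := hc
          have hmaplen : (r.map Q.s).length = r.length := by simp
          have hjlt : m + j.1 < (r.map Q.s).length := by
            have := j.2; simp at this ⊢; omega
          have hpos0 : 0 < (r.map Q.s).length := by omega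
          have hj' : (r.map Q.s).get ⟨m + j.1, hjlt⟩ = u := by
            rw [← hj]; simp
          have h0' : (r.map Q.s).get ⟨0, hpos0⟩ = u := by
            have h00 := congrArg Q.s hr0
            rw [← hk, ← hr0]; simp
          have heq : (⟨m + j.1, hjlt⟩ : Fin (r.map Q.s).length) = ⟨0, hpos0⟩ :=
            hrnd.get_inj_iff.mp (hj'.trans h0'.symm)
          have := congrArg Fin.val heq
          simp only [] at this
          omega
        · exact ((r.map Q.s).drop_sublist m).nodup hrnd
    have hl'ham : l'.length = n + 1 := hham l' hl'prim
    have hmeq : m = 1 := by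
      rw [hl'len] at hl'ham
      have hmlt : m < r.length := hivlt
      omega
    -- so v is the successor of u in r: v = s (r.get 1), and t (l.get k) = s (r.get 1)
    have htarget : Q.t (l.get k) = Q.s (r.get ⟨1, by omega⟩) := by
      rw [← hr0]
      exact isCycleList_get hrprim.1 hrne 0 (by omega)
    rw [htarget, ← hivs]
    exact congrArg Q.s (get_idx_congr r hmeq)
  -- every section of sources gives a primitive cycle
  have swap : ∀ f : Q.V → Q.A, (∀ u, Q.s (f u) = u) →
      Q.IsPrimCycle (l₀.map (fun a => f (Q.s a))) ∧
      (l₀.map (fun a => f (Q.s a))).toFinset = Finset.image f Finset.univ := by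
    intro f hf
    set lf := l₀.map (fun a => f (Q.s a)) with hlfdef
    have hlen : lf.length = l₀.length := by simp [hlfdef]
    have hlfne : lf ≠ [] := by
      intro hc; rw [hc] at hlen; exact hl₀ne (List.length_eq_zero_iff.mp hlen.symm)
    have hget : ∀ (i : ℕ) (hi : i < l₀.length),
        lf.get ⟨i, by omega⟩ = f (Q.s (l₀.get ⟨i, hi⟩)) := by
      intro i hi
      simp [hlfdef]
    have hgs : ∀ (i : ℕ) (hi : i < l₀.length),
        Q.s (lf.get ⟨i, by omega⟩) = Q.s (l₀.get ⟨i, hi⟩) := by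
      intro i hi; rw [hget i hi, hf]
    have hgt : ∀ (i : ℕ) (hi : i < l₀.length),
        Q.t (lf.get ⟨i, by omega⟩) = Q.t (l₀.get ⟨i, hi⟩) := by
      intro i hi
      rw [hget i hi]
      exact parallel l₀ hl₀prim (f (Q.s (l₀.get ⟨i, hi⟩))) ⟨i, hi⟩ (hf _).symm
    have hprim : Q.IsPrimCycle lf := by
      constructor
      · apply isCycleList_mk hlfne
        · intro i hi
          rw [hgs (i+1) (by omega), hgt i (by omega)]
          exact isCycleList_get hl₀prim.1 hl₀ne i (by omega)
        · have e1 : lf.get ⟨lf.length - 1, by have := List.length_pos_iff.mpr hlfne; omega⟩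
              = lf.get ⟨l₀.length - 1, by rw [hlen]; have := List.length_pos_iff.mpr hl₀ne; omega⟩ :=
            get_idx_congr lf (by rw [hlen])
          rw [e1, hgs 0 (List.length_pos_iff.mpr hl₀ne),
            hgt (l₀.length - 1) (by have := List.length_pos_iff.mpr hl₀ne; omega)]
          exact isCycleList_wrap hl₀prim.1 hl₀ne
      · have : lf.map Q.s = l₀.map Q.s := by
          rw [hlfdef, List.map_map]
          exact List.map_congr_left (fun a _ => hf (Q.s a))
        rw [this]; exact hl₀prim.2
    refine ⟨hprim, ?_⟩
    ext x
    simp only [List.mem_toFinset, hlfdef, List.mem_map, Finset.mem_image, Finset.mem_univ,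
      true_and]
    constructor
    · rintro ⟨a, _, rfl⟩; exact ⟨Q.s a, rfl⟩
    · rintro ⟨u, rfl⟩
      obtain ⟨a, ha, has⟩ := List.mem_map.mp (hsurj u)
      exact ⟨a, ha, by rw [has]⟩
  -- counting primitive cycles
  have hcount : ∏ u : Q.V, Q.outDeg u ≤ Q.numPrimCycles := by
    have hSecCard : Fintype.card (∀ u : Q.V, {a : Q.A // Q.s a = u})
        = ∏ u : Q.V, Q.outDeg u := by
      rw [Fintype.card_pi]
      apply Finset.prod_congr rfl
      intro u _
      rw [Fintype.card_subtype]
      rfl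
    set g : (∀ u : Q.V, {a : Q.A // Q.s a = u}) → Finset Q.A :=
      fun f => Finset.image (fun u => (f u).1) Finset.univ with hgdef
    have hginj : Function.Injective g := by
      intro f f' hff
      funext u
      have h1 : (f u).1 ∈ Finset.image (fun w => (f' w).1) Finset.univ := by
        have h2 : (f u).1 ∈ Finset.image (fun w => (f w).1) Finset.univ :=
          Finset.mem_image_of_mem _ (Finset.mem_univ u)
        rwa [show (Finset.image (fun w => (f w).1) Finset.univ)
            = Finset.image (fun w => (f' w).1) Finset.univ from hff] at h2
      obtain ⟨w, _, hw⟩ := Finset.mem_image.mp h1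
      have : w = u := by
        have := (f' w).2
        rw [hw] at this
        rw [← this, (f u).2]
      apply Subtype.ext
      rw [← hw, this]
    have hgsub : Set.range g ⊆ Q.primCycles := by
      rintro S ⟨f, rfl⟩
      obtain ⟨hprim, htf⟩ := swap (fun u => (f u).1) (fun u => (f u).2)
      exact ⟨_, hprim, htf⟩
    calc ∏ u : Q.V, Q.outDeg u = Fintype.card (∀ u : Q.V, {a : Q.A // Q.s a = u}) :=
        hSecCard.symm
      _ = Nat.card (∀ u : Q.V, {a : Q.A // Q.s a = u}) := (Nat.card_eq_fintype_card).symm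
      _ = Nat.card (Set.range g) := (Nat.card_range_of_injective hginj).symm
      _ = (Set.range g).ncard := Nat.card_coe_set_eq _
      _ ≤ Q.primCycles.ncard := Set.ncard_le_ncard hgsub (Set.toFinite _)
  -- |A| = ∑ outdeg
  have hAsum : Fintype.card Q.A = ∑ u : Q.V, Q.outDeg u := by
    rw [← Finset.card_univ]
    exact Finset.card_eq_sum_card_fiberwise (fun a _ => Finset.mem_univ (Q.s a))
  -- numeric conclusion
  have hineq : ∑ u : Q.V, Q.outDeg u + 2 ≤ ∏ u : Q.V, Q.outDeg u + Fintype.card Q.V := by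
    have h := prod_ineq Finset.univ Q.outDeg (fun u _ => (hdeg u).2)
      (by rw [Finset.card_univ, hcard]; omega)
    rwa [Finset.card_univ] at h
  have hF : 1 ≤ Q.F := by
    have h1 : ∑ u : Q.V, Q.outDeg u + 2 ≤ Q.numPrimCycles + Fintype.card Q.V := by
      calc ∑ u : Q.V, Q.outDeg u + 2 ≤ ∏ u : Q.V, Q.outDeg u + Fintype.card Q.V := hineq
        _ ≤ Q.numPrimCycles + Fintype.card Q.V := by omega
    rw [F, hAsum]
    omega
  refine ⟨⟨l₀, hl₀prim, hl₀len, ?_⟩, hF⟩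
  -- extract the two parallel extra arrows
  have h2len : 2 ≤ l₀.length := by omega
  set A₁ := l₀.get ⟨0, by omega⟩ with hA₁
  set A₂ := l₀.get ⟨1, by omega⟩ with hA₂
  have hA₁mem : A₁ ∈ l₀ := List.get_mem l₀ _
  have hA₂mem : A₂ ∈ l₀ := List.get_mem l₀ _
  have hsne : Q.s A₁ ≠ Q.s A₂ := by
    intro hc
    have h0 : (l₀.map Q.s).get ⟨0, by simp; omega⟩ = (l₀.map Q.s).get ⟨1, by simp; omega⟩ := by
      simp only [List.get_eq_getElem, List.getElem_map]
      exact hc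
    have h1 := (hl₀prim.2.get_inj_iff).mp h0
    have h2 := congrArg Fin.val h1
    simp at h2
  have hA12 : A₁ ≠ A₂ := fun hc => hsne (by rw [hc])
  -- extra arrows
  have hex : ∀ (a : Q.A), ∃ b, b ≠ a ∧ Q.s b = Q.s a := by
    intro a
    have h2 : 1 < (Finset.univ.filter fun x => Q.s x = Q.s a).card := by
      have := (hdeg (Q.s a)).2; rw [outDeg] at this; omega
    obtain ⟨b, hb, hba⟩ := Finset.exists_mem_ne h2 a
    exact ⟨b, hba, (Finset.mem_filter.mp hb).2⟩
  obtain ⟨b₁, hb₁ne, hb₁s⟩ := hex A₁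
  obtain ⟨b₂, hb₂ne, hb₂s⟩ := hex A₂
  have hb₁t : Q.t b₁ = Q.t A₁ := parallel l₀ hl₀prim b₁ ⟨0, by omega⟩ hb₁s.symm
  have hb₂t : Q.t b₂ = Q.t A₂ := parallel l₀ hl₀prim b₂ ⟨1, by omega⟩ hb₂s.symm
  have hnotmem : ∀ (b a : Q.A), a ∈ l₀ → b ≠ a → Q.s b = Q.s a → b ∉ l₀ := by
    intro b a ha hba hs hb
    exact hba (List.inj_on_of_nodup_map hl₀prim.2 hb ha hs)
  have hb₁nm : b₁ ∉ l₀ := hnotmem b₁ A₁ hA₁mem hb₁ne hb₁s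
  have hb₂nm : b₂ ∉ l₀ := hnotmem b₂ A₂ hA₂mem hb₂ne hb₂s
  have hb12 : b₁ ≠ b₂ := by
    intro hc
    apply hsne
    rw [← hb₁s, hc, hb₂s]
  exact ⟨A₁, A₂, b₁, b₂, hA₁mem, hA₂mem, hA12, hb₁nm, hb₂nm, hb12, hb₁s, hb₁t, hb₂s, hb₂t⟩

end Quiv
end

section
/- Let Q be a quiver with dimension vector α = (1, ..., 1), all vertices one-dimensional. Then the affine quotient variety iss_α Q is the toric variety whose coordinate ring is the monomial subalgebra of ℂ[Rep_α Q] generated by the monomials x_c = ∏_{a ∈ c} x_a, where c runs over the primitive cycles of Q and x_a are the coordinates corresponding to the arrows. In particular, the toric ideal Ker(φ), where φ : ℂ[y_c : c primitive cycle] → ℂ[x_a : a ∈ A] sends y_c to x_c, is generated by binomials, and a binomial ∏ y_{c_i} − ∏ y_{d_j} lies in Ker(φ) if and only if the multiset sum of the arrow sets of the c_i equals that of the d_j. -/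
namespace Quiv

variable (Q : Quiv)

open MvPolynomial in
/-- The monomial map `φ` sending the variable `y_c` of a primitive cycle `c` to the
monomial `x_c = ∏_{a ∈ c} x_a`. -/
noncomputable def cycMap (Q : Quiv) :
    MvPolynomial {c : Finset Q.A // c ∈ Q.primCycles} ℂ →ₐ[ℂ] MvPolynomial Q.A ℂ :=
  MvPolynomial.aeval fun c => ∏ a ∈ c.1, MvPolynomial.X a

open MvPolynomial in
/-- The action of the torus element `g : V → ℂˣ` on `ℂ[Rep_α Q] = ℂ[x_a : a ∈ A]`
(for `α ≡ 1`): `x_a ↦ g_{t(a)} g_{s(a)}⁻¹ x_a`. -/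
noncomputable def torusAct (Q : Quiv) (g : Q.V → ℂˣ) :
    MvPolynomial Q.A ℂ →ₐ[ℂ] MvPolynomial Q.A ℂ :=
  MvPolynomial.aeval fun a => MvPolynomial.C ((g (Q.t a) : ℂ) * (↑(g (Q.s a)))⁻¹) * MvPolynomial.X a

open MvPolynomial Finset

section Aux
variable (Q : Quiv)

/-- product of variables over a finset is the monomial of its indicator -/
lemma prod_X_finset (S : Finset Q.A) :
    (∏ a ∈ S, (X a : MvPolynomial Q.A ℂ)) = monomial (Multiset.toFinsupp S.val) 1 := by
  classical
  induction S using Finset.induction with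
  | empty => simp [monomial_zero']
  | @insert a S h ih =>
    rw [Finset.prod_insert h, ih]
    have : (insert a S).val = a ::ₘ S.val := Finset.insert_val_of_notMem h
    rw [this]
    have hc : Multiset.toFinsupp (a ::ₘ S.val) = Finsupp.single a 1 + Multiset.toFinsupp S.val := by
      ext b
      simp [Multiset.count_cons, Finsupp.single_apply, eq_comm]
      split <;> omega
    rw [hc, X, monomial_mul, one_mul]

/-- weight of an exponent vector of cycle variables -/
noncomputable def W (u : {c : Finset Q.A // c ∈ Q.primCycles} →₀ ℕ) : Q.A →₀ ℕ :=
  Multiset.toFinsupp (u.sum fun c n => n • (c.1.val : Multiset Q.A))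

lemma cycMap_monomial (u : {c : Finset Q.A // c ∈ Q.primCycles} →₀ ℕ) (r : ℂ) :
    cycMap Q (monomial u r) = monomial (W Q u) r := by
  classical
  rw [cycMap, aeval_monomial]
  have h1 : (u.prod fun c k => (∏ a ∈ c.1, (X a : MvPolynomial Q.A ℂ)) ^ k)
      = monomial (W Q u) 1 := by
    rw [Finsupp.prod]
    have : ∀ c ∈ u.support, (∏ a ∈ c.1, (X a : MvPolynomial Q.A ℂ)) ^ u c
        = monomial ((u c) • Multiset.toFinsupp (c.1.val)) 1 := by
      intro c _
      rw [prod_X_finset, monomial_pow, one_pow]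
    rw [Finset.prod_congr rfl this]
    have hW : W Q u = ∑ c ∈ u.support, (u c) • Multiset.toFinsupp (c.1.val) := by
      rw [W, Finsupp.sum, map_sum]
      exact Finset.sum_congr rfl fun c _ => map_nsmul Multiset.toFinsupp _ _
    rw [hW]
    clear hW this
    induction u.support using Finset.induction with
    | empty => simp [monomial_zero']
    | @insert c s h ih =>
      rw [Finset.prod_insert h, Finset.sum_insert h, ih, monomial_mul, one_mul]
  rw [h1, algebraMap_eq, C_mul_monomial, mul_one]

lemma binomial_mem_ker_iff (u v : {c : Finset Q.A // c ∈ Q.primCycles} →₀ ℕ) :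
    monomial u (1 : ℂ) - monomial v 1 ∈ RingHom.ker (cycMap Q).toRingHom ↔
      (u.sum fun c n => n • (c.1.val : Multiset Q.A)) =
        v.sum fun c n => n • (c.1.val : Multiset Q.A) := by
  rw [RingHom.mem_ker, AlgHom.toRingHom_eq_coe, RingHom.coe_coe, map_sub, sub_eq_zero,
    cycMap_monomial, cycMap_monomial, monomial_eq_monomial_iff]
  constructor
  · rintro (⟨h, -⟩ | ⟨h, -⟩)
    · exact Multiset.toFinsupp.injective h
    · exact absurd h one_ne_zero
  · intro h
    exact Or.inl ⟨congrArg Multiset.toFinsupp h, rfl⟩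

lemma cycMap_as_sum (p : MvPolynomial {c : Finset Q.A // c ∈ Q.primCycles} ℂ) :
    cycMap Q p = ∑ x ∈ p.support, monomial (W Q x) (coeff x p) := by
  conv_lhs => rw [p.as_sum]
  rw [map_sum]
  exact Finset.sum_congr rfl fun x _ => cycMap_monomial Q x (coeff x p)

lemma ker_eq_span :
    RingHom.ker (cycMap Q).toRingHom =
      Ideal.span {p | p ∈ RingHom.ker (cycMap Q).toRingHom ∧
        ∃ u v : ({c : Finset Q.A // c ∈ Q.primCycles} →₀ ℕ),
          p = monomial u (1 : ℂ) - monomial v 1} := by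
  classical
  apply le_antisymm
  · intro p hp
    generalize hn : p.support.card = n
    induction n using Nat.strong_induction_on generalizing p with
    | _ n ih =>
    by_cases hp0 : p = 0
    · simp [hp0]
    · obtain ⟨u, hu⟩ := (MvPolynomial.support_nonempty.mpr hp0)
      set Φ : Finset _ := p.support.filter (fun x => W Q x = W Q u) with hΦ
      have huΦ : u ∈ Φ := Finset.mem_filter.mpr ⟨hu, rfl⟩
      -- sum of coefficients over the fiber is zero
      have h0 : cycMap Q p = 0 := hp
      have hsum0 : ∑ x ∈ Φ, coeff x p = 0 := by
        have hc := congrArg (coeff (W Q u)) h0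
        rw [cycMap_as_sum, coeff_sum] at hc
        simp only [coeff_monomial, coeff_zero] at hc
        rw [hΦ, Finset.sum_filter]
        exact hc
      -- the correction term
      set T : MvPolynomial {c : Finset Q.A // c ∈ Q.primCycles} ℂ :=
        ∑ x ∈ Φ, C (coeff x p) * (monomial x 1 - monomial u 1) with hT
      have hTker : ∀ x ∈ Φ, (monomial x (1:ℂ) - monomial u 1) ∈
          RingHom.ker (cycMap Q).toRingHom := by
        intro x hx
        rw [RingHom.mem_ker, AlgHom.toRingHom_eq_coe, RingHom.coe_coe, map_sub,
          cycMap_monomial, cycMap_monomial, (Finset.mem_filter.mp hx).2, sub_self]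
      have hTspan : T ∈ Ideal.span {p | p ∈ RingHom.ker (cycMap Q).toRingHom ∧
          ∃ u v : ({c : Finset Q.A // c ∈ Q.primCycles} →₀ ℕ),
            p = monomial u (1 : ℂ) - monomial v 1} := by
        apply Ideal.sum_mem
        intro x hx
        exact Ideal.mul_mem_left _ _ (Ideal.subset_span ⟨hTker x hx, x, u, rfl⟩)
      have hTker' : T ∈ RingHom.ker (cycMap Q).toRingHom := by
        apply Ideal.sum_mem
        intro x hx
        exact Ideal.mul_mem_left _ _ (hTker x hx)
      -- rewrite T
      have hT2 : T = ∑ x ∈ Φ, monomial x (coeff x p) := by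
        rw [hT]
        have : ∀ x ∈ Φ, C (coeff x p) * (monomial x (1:ℂ) - monomial u 1)
            = monomial x (coeff x p) - monomial u (coeff x p) := by
          intro x _
          rw [mul_sub, C_mul_monomial, C_mul_monomial, mul_one]
        rw [Finset.sum_congr rfl this, Finset.sum_sub_distrib,
          ← map_sum (monomial u) (fun x => coeff x p) Φ, hsum0]
        simp
      set q := p - T with hq
      have hqcoeff : ∀ z, coeff z q = if z ∈ Φ then 0 else coeff z p := by
        intro z
        rw [hq, hT2, coeff_sub, coeff_sum]
        simp only [coeff_monomial]
        rw [Finset.sum_ite_eq' Φ z (fun x => coeff x p)]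
        split <;> simp
      have hqsupp : q.support ⊆ p.support \ Φ := by
        intro z hz
        rw [mem_support_iff, hqcoeff z] at hz
        by_cases h : z ∈ Φ
        · simp [h] at hz
        · rw [if_neg h] at hz
          exact Finset.mem_sdiff.mpr ⟨mem_support_iff.mpr hz, h⟩
      have hqker : q ∈ RingHom.ker (cycMap Q).toRingHom := sub_mem hp hTker'
      have hcard : q.support.card < n := by
        rw [← hn]
        calc q.support.card ≤ (p.support \ Φ).card := Finset.card_le_card hqsupp
          _ < p.support.card := Finset.card_lt_card
            (Finset.sdiff_ssubset (Finset.filter_subset _ _) ⟨u, huΦ⟩)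
      have hqspan := ih _ hcard hqker rfl
      have : p = q + T := by rw [hq]; ring
      rw [this]
      exact add_mem hqspan hTspan
  · rw [Ideal.span_le]
    exact fun p hp => hp.1

lemma cycle_maps_eq (l : List Q.A) (h : Q.IsCycleList l) :
    ((l.map Q.t : List Q.V) : Multiset Q.V) = ((l.map Q.s : List Q.V) : Multiset Q.V) := by
  obtain ⟨hl, hcyc⟩ := h
  have hn : 0 < l.length := List.length_pos_iff.mpr hl
  have hrot : l.map Q.t = (l.map Q.s).rotate 1 := by
    apply List.ext_getElem
    · simp
    · intro i h1 h2
      have hi : i < l.length := by simpa using h1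
      rw [List.getElem_map, List.getElem_rotate]
      have hmod : (i + 1) % (l.map Q.s).length < l.length := by
        simpa using Nat.mod_lt _ (by simpa using hn)
      rw [List.getElem_map]
      have h3 : Q.t l[i] = Q.s (l[(i+1) % l.length]'(Nat.mod_lt _ hn)) := by
        have := hcyc i
        simpa [cyc, List.get_eq_getElem, Nat.mod_eq_of_lt hi] using this
      simp only [List.length_map]
      exact h3
  rw [hrot]
  exact Multiset.coe_eq_coe.mpr (List.rotate_perm _ _)

lemma primCycle_val (S : Finset Q.A) (hS : S ∈ Q.primCycles) :
    ∃ l : List Q.A, Q.IsCycleList l ∧ (l.map Q.s).Nodup ∧ l.Nodup ∧ (S.val : Multiset Q.A) = ↑l := by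
  obtain ⟨l, ⟨hc, hnd⟩, hfin⟩ := hS
  refine ⟨l, hc, hnd, hnd.of_map Q.s, ?_⟩
  rw [← hfin, List.toFinset_val, (hnd.of_map Q.s).dedup]

/-- the product over a primitive cycle of `g_{t a} g_{s a}⁻¹` is 1 -/
lemma prod_cycle_one (S : Finset Q.A) (hS : S ∈ Q.primCycles) (g : Q.V → ℂˣ) :
    (∏ a ∈ S, ((g (Q.t a) : ℂ) * (↑(g (Q.s a)))⁻¹)) = 1 := by
  obtain ⟨l, hc, hnd, hndl, hval⟩ := primCycle_val Q S hS
  rw [Finset.prod_mul_distrib]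
  have hP : ∀ f : Q.A → Q.V, (∏ a ∈ S, ((g (f a) : ℂ))) = ((S.val.map f).map (fun v => (g v : ℂ))).prod := by
    intro f
    rw [Finset.prod_eq_multiset_prod, Multiset.map_map]
    rfl
  have hPinv : (∏ a ∈ S, ((↑(g (Q.s a)) : ℂ))⁻¹) = (∏ a ∈ S, ((g (Q.s a) : ℂ)))⁻¹ := by
    rw [← Finset.prod_inv_distrib]
  have hts : (S.val.map Q.t) = (S.val.map Q.s) := by
    rw [hval, Multiset.map_coe, Multiset.map_coe]
    exact cycle_maps_eq Q l hc
  rw [hPinv, hP Q.t, hP Q.s, hts, mul_inv_cancel₀]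
  apply Multiset.prod_ne_zero
  intro h0
  rw [Multiset.mem_map] at h0
  obtain ⟨v, -, hv⟩ := h0
  exact (g v).ne_zero hv

noncomputable def chi (g : Q.V → ℂˣ) (d : Q.A →₀ ℕ) : ℂ :=
  ∏ a : Q.A, ((g (Q.t a) : ℂ) * (↑(g (Q.s a)))⁻¹) ^ d a

lemma torusAct_monomial (g : Q.V → ℂˣ) (d : Q.A →₀ ℕ) (r : ℂ) :
    torusAct Q g (monomial d r) = monomial d (chi Q g d * r) := by
  rw [torusAct, aeval_monomial]
  have key : (d.prod fun a k => (C ((g (Q.t a) : ℂ) * (↑(g (Q.s a)))⁻¹) * X a) ^ k)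
      = C (chi Q g d) * monomial d 1 := by
    rw [Finsupp.prod]
    simp only [mul_pow, ← C_pow]
    rw [Finset.prod_mul_distrib, ← map_prod]
    have h1 : ∏ a ∈ d.support, ((g (Q.t a) : ℂ)) ^ d a * ((↑(g (Q.s a)) : ℂ))⁻¹ ^ d a
        = chi Q g d := by
      rw [chi]
      simp only [mul_pow]
      apply Finset.prod_subset (Finset.subset_univ _)
      intro a _ ha
      rw [Finsupp.notMem_support_iff.mp ha, pow_zero, pow_zero, one_mul]
    have h2 : ∏ a ∈ d.support, (X a : MvPolynomial Q.A ℂ) ^ d a = monomial d 1 := by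
      rw [monomial_eq, C_1, one_mul, Finsupp.prod]
    rw [h1, h2]
  rw [key, algebraMap_eq, ← mul_assoc, ← C_mul, mul_comm r, C_mul_monomial, mul_one]

lemma coeff_torusAct (g : Q.V → ℂˣ) (p : MvPolynomial Q.A ℂ) (d : Q.A →₀ ℕ) :
    coeff d (torusAct Q g p) = chi Q g d * coeff d p := by
  conv_lhs => rw [p.as_sum]
  rw [map_sum, coeff_sum]
  have : ∀ e ∈ p.support, coeff d (torusAct Q g (monomial e (coeff e p)))
      = if e = d then chi Q g e * coeff e p else 0 := by
    intro e _
    rw [torusAct_monomial, coeff_monomial]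
  rw [Finset.sum_congr rfl this, Finset.sum_ite_eq' p.support d]
  by_cases hd : d ∈ p.support
  · rw [if_pos hd]
  · rw [if_neg hd, notMem_support_iff.mp hd, mul_zero]

lemma balanced_of_invariant (p : MvPolynomial Q.A ℂ) (hp : ∀ g, torusAct Q g p = p)
    (d : Q.A →₀ ℕ) (hd : d ∈ p.support) (v0 : Q.V) :
    ∑ a ∈ Finset.univ.filter (fun a => Q.t a = v0), d a
      = ∑ a ∈ Finset.univ.filter (fun a => Q.s a = v0), d a := by
  classical
  set g : Q.V → ℂˣ := fun v => if v = v0 then (Units.mk0 (2:ℂ) two_ne_zero) else 1 with hg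
  have hne : coeff d p ≠ 0 := mem_support_iff.mp hd
  have h1 : chi Q g d * coeff d p = coeff d p := by rw [← coeff_torusAct, hp g]
  have hchi : chi Q g d = 1 := by
    have h2 : (chi Q g d - 1) * coeff d p = 0 := by rw [sub_mul, one_mul, h1, sub_self]
    rcases mul_eq_zero.mp h2 with h | h
    · exact sub_eq_zero.mp h
    · exact absurd h hne
  have hcoe : ∀ v, ((g v : ℂ)) = if v = v0 then 2 else 1 := by
    intro v; simp only [hg]; by_cases h : v = v0 <;> simp [h]
  rw [chi] at hchi
  simp only [hcoe, mul_pow, apply_ite (Inv.inv : ℂ → ℂ), inv_one] at hchi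
  rw [Finset.prod_mul_distrib] at hchi
  have e1 : (∏ a : Q.A, (if Q.t a = v0 then (2:ℂ) else 1) ^ d a)
      = 2 ^ ∑ a ∈ Finset.univ.filter (fun a => Q.t a = v0), d a := by
    rw [← Finset.prod_pow_eq_pow_sum, Finset.prod_filter]
    apply Finset.prod_congr rfl
    intro a _
    rw [apply_ite (· ^ d a), one_pow]
  have e2 : (∏ a : Q.A, (if Q.s a = v0 then (2:ℂ)⁻¹ else 1) ^ d a)
      = (2:ℂ)⁻¹ ^ ∑ a ∈ Finset.univ.filter (fun a => Q.s a = v0), d a := by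
    rw [← Finset.prod_pow_eq_pow_sum, Finset.prod_filter]
    apply Finset.prod_congr rfl
    intro a _
    rw [apply_ite (· ^ d a), one_pow]
  rw [e1, e2, inv_pow, mul_inv_eq_one₀ (pow_ne_zero _ two_ne_zero)] at hchi
  have hnat : (((2 ^ ∑ a ∈ Finset.univ.filter (fun a => Q.t a = v0), d a : ℕ)) : ℂ)
      = (((2 ^ ∑ a ∈ Finset.univ.filter (fun a => Q.s a = v0), d a : ℕ)) : ℂ) := by
    push_cast
    exact hchi
  exact Nat.pow_right_injective le_rfl (Nat.cast_injective hnat)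

/-- balanced exponent vectors: at each vertex, weighted in-degree equals weighted out-degree -/
def Bal (d : Q.A →₀ ℕ) : Prop :=
  ∀ v, ∑ a ∈ Finset.univ.filter (fun a => Q.t a = v), d a
     = ∑ a ∈ Finset.univ.filter (fun a => Q.s a = v), d a

lemma exists_next (d : Q.A →₀ ℕ) (hbal : Q.Bal d) (a : Q.A) (ha : 1 ≤ d a) :
    ∃ b, Q.s b = Q.t a ∧ 1 ≤ d b := by
  by_contra h
  push_neg at h
  have h1 : ∑ b ∈ Finset.univ.filter (fun b => Q.s b = Q.t a), d b = 0 :=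
    Finset.sum_eq_zero fun b hb => by
      have := h b (Finset.mem_filter.mp hb).2; omega
  have h2 : 1 ≤ ∑ b ∈ Finset.univ.filter (fun b => Q.t b = Q.t a), d b :=
    le_trans ha (Finset.single_le_sum (f := fun b => d b) (fun _ _ => Nat.zero_le _)
      (Finset.mem_filter.mpr ⟨Finset.mem_univ a, rfl⟩))
  rw [hbal (Q.t a), h1] at h2
  omega

noncomputable def walk (d : Q.A →₀ ℕ) (hbal : Q.Bal d) (a0 : Q.A) (h0 : 1 ≤ d a0) :
    ℕ → {a : Q.A // 1 ≤ d a}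
  | 0 => ⟨a0, h0⟩
  | n+1 => ⟨(Q.exists_next d hbal (walk d hbal a0 h0 n).1 (walk d hbal a0 h0 n).2).choose,
      (Q.exists_next d hbal (walk d hbal a0 h0 n).1 (walk d hbal a0 h0 n).2).choose_spec.2⟩

lemma walk_step (d : Q.A →₀ ℕ) (hbal : Q.Bal d) (a0 : Q.A) (h0 : 1 ≤ d a0) (n : ℕ) :
    Q.s (Q.walk d hbal a0 h0 (n+1)).1 = Q.t (Q.walk d hbal a0 h0 n).1 := by
  rw [walk]
  exact (Q.exists_next d hbal (Q.walk d hbal a0 h0 n).1 (Q.walk d hbal a0 h0 n).2).choose_spec.1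

lemma exists_prim_cycle (d : Q.A →₀ ℕ) (hbal : Q.Bal d) (hd : d ≠ 0) :
    ∃ l : List Q.A, Q.IsPrimCycle l ∧ (∀ a ∈ l, 1 ≤ d a) := by
  classical
  obtain ⟨a0, h0⟩ : ∃ a, 1 ≤ d a := by
    by_contra h
    push_neg at h
    apply hd
    ext a
    have := h a
    simp only [Finsupp.coe_zero, Pi.zero_apply]
    omega
  set f : ℕ → Q.A := fun n => (Q.walk d hbal a0 h0 n).1 with hf
  have hfd : ∀ n, 1 ≤ d (f n) := fun n => (Q.walk d hbal a0 h0 n).2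
  set vv : ℕ → Q.V := fun n => Q.s (f n) with hvv
  have hstep : ∀ n, vv (n+1) = Q.t (f n) := fun n => Q.walk_step d hbal a0 h0 n
  have hex : ∃ j, ∃ i, i < j ∧ vv i = vv j := by
    obtain ⟨x, y, hxy, hv⟩ := Finite.exists_ne_map_eq_of_infinite vv
    rcases lt_or_gt_of_ne hxy with h | h
    · exact ⟨y, x, h, hv⟩
    · exact ⟨x, y, h, hv.symm⟩
  set j := Nat.find hex with hjdef
  obtain ⟨i, hij, hvij⟩ := Nat.find_spec hex
  have hmin : ∀ p q, p < q → q < j → vv p ≠ vv q := by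
    intro p q hpq hqj hne
    exact Nat.find_min hex hqj ⟨p, hpq, hne⟩
  set n := j - i with hn
  have hn0 : 0 < n := by omega
  have hji : j = i + n := by omega
  refine ⟨(List.range n).map (fun k => f (i + k)), ⟨?_, ?_⟩, ?_⟩
  · -- IsCycleList
    have hne : (List.range n).map (fun k => f (i + k)) ≠ [] := by
      simp only [ne_eq, List.map_eq_nil_iff, List.range_eq_nil]
      omega
    refine ⟨hne, ?_⟩
    intro m
    have hlen : ((List.range n).map (fun k => f (i + k))).length = n := by simp
    have hget : ∀ (k : ℕ) (h : k < ((List.range n).map (fun k => f (i + k))).length),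
        ((List.range n).map (fun k => f (i + k))).get ⟨k, h⟩ = f (i + k) := by
      intro k h
      simp [List.get_eq_getElem]
    rw [cyc, cyc, hget, hget]
    have hmod1 : (m + 1) % (((List.range n).map (fun k => f (i + k))).length)
        = (m % n + 1) % n := by
      rw [hlen, ← Nat.mod_add_mod]
    have hmod0 : m % (((List.range n).map (fun k => f (i + k))).length) = m % n := by
      rw [hlen]
    rw [hmod1, hmod0]
    have hr : m % n < n := Nat.mod_lt _ hn0
    show Q.t (f (i + m % n)) = Q.s (f (i + (m % n + 1) % n))
    have hL : Q.t (f (i + m % n)) = vv (i + m % n + 1) := (hstep _).symm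
    rw [hL]
    show vv (i + m % n + 1) = vv (i + (m % n + 1) % n)
    by_cases hcase : m % n + 1 < n
    · rw [Nat.mod_eq_of_lt hcase, ← Nat.add_assoc]
    · have h1 : m % n + 1 = n := by omega
      rw [h1, Nat.mod_self, add_zero]
      have h2 : i + m % n + 1 = j := by omega
      rw [h2, hjdef, ← hvij]
  · -- Nodup of map s
    rw [List.map_map]
    have : (Q.s ∘ fun k => f (i + k)) = fun k => vv (i + k) := rfl
    rw [this]
    apply List.Nodup.map_on _ (List.nodup_range (n := n))
    intro x hx y hy hxy
    rw [List.mem_range] at hx hy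
    by_contra hne
    rcases Nat.lt_or_ge x y with h | h
    · exact hmin (i + x) (i + y) (by omega) (by omega) hxy
    · have h' : y < x := by omega
      exact hmin (i + y) (i + x) (by omega) (by omega) hxy.symm
  · intro a ha
    rw [List.mem_map] at ha
    obtain ⟨k, -, hk⟩ := ha
    rw [← hk]
    exact hfd (i + k)

lemma sum_count_filter (m : Multiset Q.A) (f : Q.A → Q.V) (v : Q.V) :
    ∑ a ∈ Finset.univ.filter (fun a => f a = v), m.count a = (m.map f).count v := by
  induction m using Multiset.induction with
  | empty => simp
  | cons a m ih =>
    simp only [Multiset.count_cons, Multiset.map_cons, Finset.sum_add_distrib, ih]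
    congr 1
    rw [Finset.sum_ite_eq' (Finset.univ.filter (fun a => f a = v)) a (fun _ => 1)]
    by_cases h : f a = v <;> simp [h, eq_comm]

lemma bal_cycle (S : Finset Q.A) (hS : S ∈ Q.primCycles) :
    Q.Bal (Multiset.toFinsupp S.val) := by
  intro v
  simp only [Multiset.toFinsupp_apply]
  rw [sum_count_filter, sum_count_filter]
  obtain ⟨l, hc, -, -, hval⟩ := primCycle_val Q S hS
  rw [hval, Multiset.map_coe, Multiset.map_coe, cycle_maps_eq Q l hc]

lemma sum_sub_of_le (d e : Q.A →₀ ℕ) (hle : ∀ a, e a ≤ d a) (F : Finset Q.A) :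
    ∑ a ∈ F, (d - e) a = ∑ a ∈ F, d a - ∑ a ∈ F, e a := by
  rw [eq_tsub_iff_add_eq_of_le (Finset.sum_le_sum fun a _ => hle a), ← Finset.sum_add_distrib]
  exact Finset.sum_congr rfl fun a _ => by rw [Finsupp.tsub_apply]; have := hle a; omega

lemma bal_sub (d e : Q.A →₀ ℕ) (hd : Q.Bal d) (he : Q.Bal e) (hle : ∀ a, e a ≤ d a) :
    Q.Bal (d - e) := by
  intro v
  rw [sum_sub_of_le Q d e hle, sum_sub_of_le Q d e hle, hd v, he v]

lemma monomial_mem (d : Q.A →₀ ℕ) (hbal : Q.Bal d) (r : ℂ) :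
    monomial d r ∈ Algebra.adjoin ℂ (Set.range fun c : {c : Finset Q.A // c ∈ Q.primCycles} =>
      ∏ a ∈ c.1, (X a : MvPolynomial Q.A ℂ)) := by
  classical
  generalize hN : ∑ a : Q.A, d a = N
  induction N using Nat.strong_induction_on generalizing d with
  | _ N ih =>
  by_cases hd0 : d = 0
  · rw [hd0, monomial_zero']
    exact Subalgebra.algebraMap_mem _ r
  · obtain ⟨l, hprim, hld⟩ := Q.exists_prim_cycle d hbal hd0
    set S : Finset Q.A := l.toFinset with hSdef
    have hS : S ∈ Q.primCycles := ⟨l, hprim, rfl⟩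
    set e : Q.A →₀ ℕ := Multiset.toFinsupp S.val with hedef
    have hcount : ∀ a, S.val.count a ≤ 1 := Multiset.nodup_iff_count_le_one.mp S.nodup
    have hle : ∀ a, e a ≤ d a := by
      intro a
      rw [hedef, Multiset.toFinsupp_apply]
      by_cases hmem : a ∈ S
      · have h1 : a ∈ l := List.mem_toFinset.mp hmem
        have := hld a h1
        have := hcount a
        omega
      · rw [Multiset.count_eq_zero_of_notMem (by simpa using hmem)]
        omega
    have hBe : Q.Bal e := bal_cycle Q S hS
    have hne : l ≠ [] := hprim.1.1
    have he1 : 1 ≤ ∑ a : Q.A, e a := by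
      obtain ⟨a, ha⟩ := List.exists_mem_of_ne_nil l hne
      have haS : a ∈ S := List.mem_toFinset.mpr ha
      have : 1 ≤ e a := by
        rw [hedef, Multiset.toFinsupp_apply]
        exact Multiset.one_le_count_iff_mem.mpr (by simpa using haS)
      exact le_trans this (Finset.single_le_sum (f := fun a => e a)
        (fun _ _ => Nat.zero_le _) (Finset.mem_univ a))
    have hde : d - e + e = d := by
      ext a
      rw [Finsupp.add_apply, Finsupp.tsub_apply]
      have := hle a
      omega
    have hsplit : monomial d r = monomial (d - e) r * monomial e 1 := by
      rw [monomial_mul, mul_one, hde]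
    have hgen : (monomial e (1:ℂ)) ∈ Algebra.adjoin ℂ
        (Set.range fun c : {c : Finset Q.A // c ∈ Q.primCycles} =>
          ∏ a ∈ c.1, (X a : MvPolynomial Q.A ℂ)) := by
      rw [hedef, ← prod_X_finset]
      exact Algebra.subset_adjoin ⟨⟨S, hS⟩, rfl⟩
    have hlt : ∑ a : Q.A, (d - e) a < N := by
      rw [sum_sub_of_le Q d e hle, ← hN]
      have hdsum : ∑ a : Q.A, e a ≤ ∑ a : Q.A, d a := Finset.sum_le_sum fun a _ => hle a
      omega
    have hrec := ih _ hlt (d - e) (bal_sub Q d e hbal hBe hle) rfl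
    rw [hsplit]
    exact mul_mem hrec hgen

lemma gen_invariant (S : Finset Q.A) (hS : S ∈ Q.primCycles) (g : Q.V → ℂˣ) :
    torusAct Q g (∏ a ∈ S, X a) = ∏ a ∈ S, X a := by
  rw [map_prod]
  have : ∀ a ∈ S, torusAct Q g (X a) = C ((g (Q.t a) : ℂ) * (↑(g (Q.s a)))⁻¹) * X a := by
    intro a _
    rw [torusAct, aeval_X]
  rw [Finset.prod_congr rfl this, Finset.prod_mul_distrib, ← map_prod,
    prod_cycle_one Q S hS, C_1, one_mul]

noncomputable def invAlg : Subalgebra ℂ (MvPolynomial Q.A ℂ) where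
  carrier := {p | ∀ g, torusAct Q g p = p}
  mul_mem' := fun hx hy g => by rw [map_mul, hx g, hy g]
  add_mem' := fun hx hy g => by rw [map_add, hx g, hy g]
  algebraMap_mem' := fun r g => by rw [AlgHom.commutes]

lemma part1 :
    ((Algebra.adjoin ℂ (Set.range fun c : {c : Finset Q.A // c ∈ Q.primCycles} =>
        ∏ a ∈ c.1, MvPolynomial.X a) : Subalgebra ℂ (MvPolynomial Q.A ℂ)) :
        Set (MvPolynomial Q.A ℂ))
      = {p | ∀ g : Q.V → ℂˣ, torusAct Q g p = p} := by
  have hle : Algebra.adjoin ℂ (Set.range fun c : {c : Finset Q.A // c ∈ Q.primCycles} =>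
      ∏ a ∈ c.1, (X a : MvPolynomial Q.A ℂ)) ≤ Q.invAlg := by
    apply Algebra.adjoin_le
    rintro x ⟨c, rfl⟩ g
    exact gen_invariant Q c.1 c.2 g
  ext p
  simp only [SetLike.mem_coe, Set.mem_setOf_eq]
  constructor
  · intro hp g
    exact hle hp g
  · intro hp
    have hmem : ∑ v ∈ p.support, monomial v (coeff v p) ∈ Algebra.adjoin ℂ
        (Set.range fun c : {c : Finset Q.A // c ∈ Q.primCycles} =>
          ∏ a ∈ c.1, (X a : MvPolynomial Q.A ℂ)) := by
      apply Subalgebra.sum_mem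
      intro d hd
      exact monomial_mem Q d (fun v => balanced_of_invariant Q p hp d hd v) _
    rw [p.as_sum]
    exact hmem
end Aux

open MvPolynomial in
/-- for `α ≡ 1`, the invariant ring `ℂ[iss_α Q]` is the monomial
subalgebra of `ℂ[x_a : a ∈ A]` generated by the primitive cycle monomials `x_c`;
the toric ideal `Ker φ` is generated by the binomials it contains; and a binomial
`∏ y_{cᵢ} - ∏ y_{dⱼ}` lies in `Ker φ` iff the multiset sums of arrows agree. -/
theorem stmt_11 (Q : Quiv) :
    ((Algebra.adjoin ℂ (Set.range fun c : {c : Finset Q.A // c ∈ Q.primCycles} =>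
        ∏ a ∈ c.1, MvPolynomial.X a) : Subalgebra ℂ (MvPolynomial Q.A ℂ)) : Set (MvPolynomial Q.A ℂ))
      = {p | ∀ g : Q.V → ℂˣ, torusAct Q g p = p} ∧
    RingHom.ker (cycMap Q).toRingHom =
      Ideal.span {p | p ∈ RingHom.ker (cycMap Q).toRingHom ∧
        ∃ u v : ({c : Finset Q.A // c ∈ Q.primCycles} →₀ ℕ),
          p = monomial u (1 : ℂ) - monomial v 1} ∧
    ∀ u v : ({c : Finset Q.A // c ∈ Q.primCycles} →₀ ℕ),
      (monomial u (1 : ℂ) - monomial v 1 ∈ RingHom.ker (cycMap Q).toRingHom ↔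
        (u.sum fun c n => n • (c.1.val : Multiset Q.A)) =
          v.sum fun c n => n • (c.1.val : Multiset Q.A)) :=
  ⟨part1 Q, ker_eq_span Q, fun u v => binomial_mem_ker_iff Q u v⟩

end Quiv
end
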